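/- Let s ∈ M and let d : M → R be the linear functional d(m) := polar Q (s, m). Then for every element x of the Clifford algebra Cl(Q), the super-commutator of x with ι(s) equals the left contraction of x by d: ι(s)·x − involute(x)·ι(s) = d ⌋ x, where involute denotes the grade involution of Cl(Q) (the algebra automorphism with involute(ι(m)) = −ι(m)) and d ⌋ (−) denotes left contraction by d (the unique operator with d ⌋ 1 = 0 and d ⌋ (ι(m)·x) = d(m)•x − ι(m)·(d ⌋ x)). In particular, on elements of even degree this super-commutator is the ordinary commutator and on elements of odd degree it is the anticommutator, and it acts as interior multiplication by s with respect to the polar pairing. -/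
import Mathlib

/-- For `s ∈ M` with associated linear functional `d = polar Q (s, ·)`,
the super-commutator of any Clifford algebra element `x` with `ι s` equals the left
contraction of `x` by `d`: `ι s · x − involute x · ι s = d ⌋ x`. -/
theorem super_commutator_eq_contractLeft
    {R M : Type*} [CommRing R] [AddCommGroup M] [Module R M]
    (Q : QuadraticForm R M) (s : M) :
    ∀ x : CliffordAlgebra Q,
      CliffordAlgebra.ι Q s * x - CliffordAlgebra.involute x * CliffordAlgebra.ι Q s
        = CliffordAlgebra.contractLeft (Q := Q) (QuadraticMap.polarBilin Q s) x := by
  intro x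
  induction x using CliffordAlgebra.left_induction with
  | algebraMap r =>
      rw [CliffordAlgebra.contractLeft_algebraMap,
        CliffordAlgebra.involute.commutes, Algebra.commutes, sub_self]
  | add x y hx hy =>
      simp only [map_add]
      rw [← hx, ← hy]
      noncomm_ring
  | ι_mul x m hx =>
      rw [CliffordAlgebra.contractLeft_ι_mul, map_mul, CliffordAlgebra.involute_ι, ← hx,
        Algebra.smul_def, ← mul_assoc, CliffordAlgebra.ι_mul_ι_comm]
      simp only [QuadraticMap.polarBilin_apply_apply]
      noncomm_ring
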